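/- Let n, k, l be integers with 0 ≤ k and k + l ≤ n. Then the map ψ_n^l : A_{n,k} → A_{n,k+l} is S_n-equivariant: ψ_n^l(σ·f) = σ·ψ_n^l(f) for all σ ∈ S_n and f ∈ A_{n,k}. Moreover, if k ≤ m ≤ n − k, then the restriction of ψ_n^{m−k} to A⁰_{n,k} is injective; hence ψ_n^{m−k} is an isomorphism of representations of S_n from A⁰_{n,k} onto H^k_{n,m}. -/
import Mathlib


open MvPolynomial Finset

noncomputable section

/-- The "square-free monomial" `x_I = ∏_{i ∈ I} x_i`. -/
def xI (n : ℕ) (I : Finset (Fin n)) : MvPolynomial (Fin n) ℂ := ∏ i ∈ I, X i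

/-- `A_{n,k}`: the span of the square-free monomials of degree `k`. -/
def Aspace (n k : ℕ) : Submodule ℂ (MvPolynomial (Fin n) ℂ) :=
  Submodule.span ℂ {f | ∃ I : Finset (Fin n), I.card = k ∧ f = xI n I}

/-- The coefficient `c_I` of the monomial `x_I` in `f`. -/
def coeffI {n : ℕ} (f : MvPolynomial (Fin n) ℂ) (I : Finset (Fin n)) : ℂ :=
  MvPolynomial.coeff (∑ i ∈ I, Finsupp.single i 1) f

/-- `A⁰_{n,k}`: elements `∑ c_I x_I` of `A_{n,k}` with `∑_{j ∉ J} c_{J ∪ {j}} = 0`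
for every `(k-1)`-element subset `J`. -/
def A0space (n k : ℕ) : Submodule ℂ (MvPolynomial (Fin n) ℂ) where
  carrier := {f | f ∈ Aspace n k ∧ ∀ J : Finset (Fin n), J.card = k - 1 →
    ∑ j ∈ Jᶜ, coeffI f (insert j J) = 0}
  add_mem' := by
    rintro f g ⟨hf1, hf2⟩ ⟨hg1, hg2⟩
    refine ⟨Submodule.add_mem _ hf1 hg1, fun J hJ => ?_⟩
    have h1 := hf2 J hJ
    have h2 := hg2 J hJ
    simp only [coeffI] at h1 h2 ⊢
    simp only [coeff_add]
    rw [Finset.sum_add_distrib, h1, h2, add_zero]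
  zero_mem' := by
    refine ⟨Submodule.zero_mem _, fun J hJ => ?_⟩
    simp [coeffI]
  smul_mem' := by
    rintro c f ⟨hf1, hf2⟩
    refine ⟨Submodule.smul_mem _ c hf1, fun J hJ => ?_⟩
    have h1 := hf2 J hJ
    simp only [coeffI] at h1 ⊢
    simp only [coeff_smul, smul_eq_mul]
    rw [← Finset.mul_sum, h1, mul_zero]

/-- `ψ_n^l`, the linear map sending the square-free monomial `x_I` to
`x_I · ∑_S x_S`, the sum over all `l`-element subsets `S` of `{1,…,n} \ I`. -/
def psi (n l : ℕ) : MvPolynomial (Fin n) ℂ →ₗ[ℂ] MvPolynomial (Fin n) ℂ :=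
  ∑ S ∈ Finset.univ.filter (fun S : Finset (Fin n) => S.card = l),
    (LinearMap.mulRight ℂ (xI n S)).comp
      (aeval (fun i : Fin n => if i ∈ S then 0 else X i) :
        MvPolynomial (Fin n) ℂ →ₐ[ℂ] MvPolynomial (Fin n) ℂ).toLinearMap

/-- `H^k_{n,m} = ψ_n^{m-k}(A⁰_{n,k})`. -/
def Hspace (n m k : ℕ) : Submodule ℂ (MvPolynomial (Fin n) ℂ) :=
  (A0space n k).map (psi n (m - k))

/-- The squared norm of a form: the monomials `x_I` are an orthonormal basis. -/
def sqNorm {n : ℕ} (f : MvPolynomial (Fin n) ℂ) : ℝ :=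
  ∑ d ∈ f.support, Complex.normSq (f.coeff d)

/-- The inner product of two forms: the monomials `x_I` are an orthonormal basis. -/
def pInner {n : ℕ} (f g : MvPolynomial (Fin n) ℂ) : ℂ :=
  ∑ d ∈ f.support, f.coeff d * (starRingEnd ℂ) (g.coeff d)


section Aux

variable {n : ℕ}

/-- The exponent vector of the square-free monomial on `I`. -/
def degI (n : ℕ) (I : Finset (Fin n)) : (Fin n) →₀ ℕ := ∑ i ∈ I, Finsupp.single i 1

lemma degI_apply (I : Finset (Fin n)) (j : Fin n) :
    degI n I j = if j ∈ I then 1 else 0 := by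
  classical
  rw [degI, Finset.sum_apply']
  simp [Finsupp.single_apply]

lemma degI_inj {I J : Finset (Fin n)} (h : degI n I = degI n J) : I = J := by
  ext j
  have h2 := DFunLike.congr_fun h j
  rw [degI_apply, degI_apply] at h2
  by_cases hI : j ∈ I <;> by_cases hJ : j ∈ J <;> simp_all

lemma xI_eq (I : Finset (Fin n)) : xI n I = monomial (degI n I) 1 := by
  classical
  induction I using Finset.induction with
  | empty => simp [xI, degI, monomial_zero']
  | @insert a s h ih =>
    have hd : degI n (insert a s) = Finsupp.single a 1 + degI n s :=
      Finset.sum_insert h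
    rw [xI, Finset.prod_insert h, ← xI, ih, hd, monomial_single_add, pow_one]

lemma coeffI_xI (I J : Finset (Fin n)) :
    coeffI (xI n J) I = if I = J then 1 else 0 := by
  classical
  rw [coeffI, xI_eq, coeff_monomial]
  have : (∑ i ∈ I, Finsupp.single i 1) = degI n I := rfl
  rw [this]
  by_cases h : I = J
  · subst h; simp
  · rw [if_neg h, if_neg (fun hd => h (degI_inj hd.symm))]

lemma coeffI_sum {α : Type*} (s : Finset α) (g : α → MvPolynomial (Fin n) ℂ)
    (T : Finset (Fin n)) : coeffI (∑ i ∈ s, g i) T = ∑ i ∈ s, coeffI (g i) T := by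
  simp [coeffI, MvPolynomial.coeff_sum]

lemma coeffI_smul (a : ℂ) (f : MvPolynomial (Fin n) ℂ) (T : Finset (Fin n)) :
    coeffI (a • f) T = a * coeffI f T := by
  simp [coeffI, MvPolynomial.coeff_smul]

lemma psi_apply (l : ℕ) (f : MvPolynomial (Fin n) ℂ) :
    psi n l f = ∑ S ∈ Finset.univ.filter (fun S : Finset (Fin n) => S.card = l),
      (aeval (fun i : Fin n => if i ∈ S then 0 else X i) f) * xI n S := by
  rw [psi, LinearMap.sum_apply]
  rfl

lemma xI_mul {I S : Finset (Fin n)} (h : Disjoint I S) :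
    xI n I * xI n S = xI n (I ∪ S) := (Finset.prod_union h).symm

lemma psi_xI (l : ℕ) (I : Finset (Fin n)) :
    psi n l (xI n I) = ∑ S ∈ Iᶜ.powersetCard l, xI n (I ∪ S) := by
  classical
  rw [psi_apply]
  have hterm : ∀ S ∈ Finset.univ.filter (fun S : Finset (Fin n) => S.card = l),
      (aeval (fun i : Fin n => if i ∈ S then 0 else X i) (xI n I)) * xI n S
      = if S ⊆ Iᶜ then xI n (I ∪ S) else 0 := by
    intro S _
    rw [xI, map_prod]
    by_cases h : S ⊆ Iᶜ
    · rw [if_pos h]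
      have hd : Disjoint I S := by
        rw [Finset.disjoint_right]
        intro a haS haI
        exact (Finset.mem_compl.mp (h haS)) haI
      have : ∀ i ∈ I, (aeval (fun j : Fin n => if j ∈ S then (0 : MvPolynomial (Fin n) ℂ) else X j) :
          MvPolynomial (Fin n) ℂ →ₐ[ℂ] MvPolynomial (Fin n) ℂ) (X i) = X i := by
        intro i hi
        rw [aeval_X, if_neg (Finset.disjoint_left.mp hd hi)]
      rw [Finset.prod_congr rfl this, ← xI, xI_mul hd]
    · rw [if_neg h]
      obtain ⟨a, haS, haI⟩ : ∃ a ∈ S, a ∈ I := by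
        by_contra hc
        push_neg at hc
        exact h fun x hx => Finset.mem_compl.mpr (hc x hx)
      rw [Finset.prod_eq_zero haI, zero_mul]
      rw [aeval_X, if_pos haS]
  rw [Finset.sum_congr rfl hterm, Finset.sum_ite, Finset.sum_const_zero, add_zero]
  apply Finset.sum_congr _ (fun _ _ => rfl)
  ext S
  simp [Finset.mem_powersetCard, and_comm]

lemma repr_mem (k : ℕ) (f : MvPolynomial (Fin n) ℂ) (hf : f ∈ Aspace n k) :
    f = ∑ I ∈ Finset.univ.powersetCard k, coeffI f I • xI n I := by
  classical
  induction hf using Submodule.span_induction with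
  | mem x hx =>
    obtain ⟨J, hJ, rfl⟩ := hx
    have : ∀ I ∈ Finset.univ.powersetCard k, coeffI (xI n J) I • xI n I
        = if I = J then xI n I else 0 := by
      intro I _
      rw [coeffI_xI]
      split_ifs <;> simp
    rw [Finset.sum_congr rfl this, Finset.sum_ite_eq' (Finset.univ.powersetCard k) J,
      if_pos (Finset.mem_powersetCard_univ.mpr hJ)]
  | zero => simp [coeffI]
  | add x y hx hy ihx ihy =>
    conv_lhs => rw [ihx, ihy]
    rw [← Finset.sum_add_distrib]
    exact Finset.sum_congr rfl fun I _ => by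
      rw [coeffI, coeffI, coeffI, coeff_add, add_smul]
  | smul a x hx ihx =>
    conv_lhs => rw [ihx]
    rw [Finset.smul_sum]
    exact Finset.sum_congr rfl fun I _ => by
      rw [coeffI, coeffI, coeff_smul, smul_eq_mul, mul_smul]

lemma coeffI_psi (k l : ℕ) (f : MvPolynomial (Fin n) ℂ) (hf : f ∈ Aspace n k)
    (T : Finset (Fin n)) (hT : T.card = k + l) :
    coeffI (psi n l f) T = ∑ I ∈ T.powersetCard k, coeffI f I := by
  classical
  conv_lhs => rw [repr_mem k f hf]
  rw [map_sum, coeffI_sum]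
  have hterm : ∀ I ∈ Finset.univ.powersetCard k,
      coeffI (psi n l (coeffI f I • xI n I)) T
      = coeffI f I * (if I ⊆ T then 1 else 0) := by
    intro I hI
    have hIk : I.card = k := Finset.mem_powersetCard_univ.mp hI
    rw [map_smul, coeffI_smul, psi_xI, coeffI_sum]
    congr 1
    have : ∀ S ∈ Iᶜ.powersetCard l, coeffI (xI n (I ∪ S)) T
        = if T = I ∪ S then (1 : ℂ) else 0 := fun S _ => coeffI_xI T (I ∪ S)
    rw [Finset.sum_congr rfl this]
    by_cases hIT : I ⊆ T
    · rw [if_pos hIT]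
      have hmem : T \ I ∈ Iᶜ.powersetCard l := by
        rw [Finset.mem_powersetCard]
        refine ⟨fun x hx => Finset.mem_compl.mpr (Finset.mem_sdiff.mp hx).2, ?_⟩
        rw [Finset.card_sdiff_of_subset hIT, hT, hIk]
        omega
      rw [Finset.sum_eq_single_of_mem (T \ I) hmem]
      · rw [if_pos (Finset.union_sdiff_of_subset hIT).symm]
      · intro S hS hSne
        rw [if_neg]
        intro hTeq
        apply hSne
        have hdisj : Disjoint I S := by
          rw [Finset.disjoint_right]
          exact fun a haS haI =>
            (Finset.mem_compl.mp ((Finset.mem_powersetCard.mp hS).1 haS)) haI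
        rw [hTeq, Finset.union_sdiff_cancel_left hdisj]
    · rw [if_neg hIT]
      apply Finset.sum_eq_zero
      intro S _
      rw [if_neg]
      intro hTeq
      exact hIT (hTeq ▸ Finset.subset_union_left)
  rw [Finset.sum_congr rfl hterm]
  simp only [mul_ite, mul_one, mul_zero]
  rw [← Finset.sum_filter]
  congr 1
  ext I
  simp [Finset.mem_powersetCard, and_comm]

/-- Double counting: summing `c (insert j J)` over pairs `(J, j)` with `J ⊆ T` of
card `k'` and `j ∈ T \ J` equals `(k'+1)` times the sum of `c I` over `I ⊆ T` of card `k'+1`. -/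
lemma double_count (k' : ℕ) (T : Finset (Fin n)) (c : Finset (Fin n) → ℂ) :
    ∑ J ∈ T.powersetCard k', ∑ j ∈ T \ J, c (insert j J)
      = ((k' : ℂ) + 1) * ∑ I ∈ T.powersetCard (k' + 1), c I := by
  classical
  have hr : ((k' : ℂ) + 1) * ∑ I ∈ T.powersetCard (k' + 1), c I
      = ∑ I ∈ T.powersetCard (k' + 1), ∑ _i ∈ I, c I := by
    rw [Finset.mul_sum]
    refine Finset.sum_congr rfl fun I hI => ?_
    rw [Finset.sum_const, (Finset.mem_powersetCard.mp hI).2, nsmul_eq_mul]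
    push_cast
    ring
  rw [hr, Finset.sum_sigma', Finset.sum_sigma']
  refine Finset.sum_nbij' (fun x => ⟨insert x.2 x.1, x.2⟩) (fun y => ⟨y.1.erase y.2, y.2⟩)
    ?_ ?_ ?_ ?_ ?_
  · rintro ⟨J, j⟩ hx
    rw [Finset.mem_sigma] at hx ⊢
    obtain ⟨hJ, hj⟩ := hx
    rw [Finset.mem_powersetCard] at hJ
    rw [Finset.mem_sdiff] at hj
    refine ⟨Finset.mem_powersetCard.mpr ⟨Finset.insert_subset hj.1 hJ.1, ?_⟩,
      Finset.mem_insert_self _ _⟩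
    rw [Finset.card_insert_of_notMem hj.2, hJ.2]
  · rintro ⟨I, i⟩ hy
    rw [Finset.mem_sigma] at hy ⊢
    obtain ⟨hI, hi⟩ := hy
    rw [Finset.mem_powersetCard] at hI
    refine ⟨Finset.mem_powersetCard.mpr ⟨(Finset.erase_subset _ _).trans hI.1, ?_⟩, ?_⟩
    · rw [Finset.card_erase_of_mem hi, hI.2]
      omega
    · exact Finset.mem_sdiff.mpr ⟨hI.1 hi, Finset.notMem_erase _ _⟩
  · rintro ⟨J, j⟩ hx
    rw [Finset.mem_sigma, Finset.mem_sdiff] at hx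
    simp [Finset.erase_insert hx.2.2]
  · rintro ⟨I, i⟩ hy
    rw [Finset.mem_sigma] at hy
    simp [Finset.insert_erase hy.2]
  · rintro ⟨J, j⟩ _
    rfl

/-- The core combinatorial statement: a harmonic coefficient family whose level-`(k+l)`
sums all vanish is identically zero on `k`-sets (when `2k + l ≤ n`). -/
lemma core (k l : ℕ) (hn : 2 * k + l ≤ n) (c : Finset (Fin n) → ℂ)
    (hharm : ∀ J : Finset (Fin n), J.card = k - 1 → ∑ j ∈ Jᶜ, c (insert j J) = 0)
    (htop : ∀ T : Finset (Fin n), T.card = k + l → ∑ I ∈ T.powersetCard k, c I = 0) :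
    ∀ I : Finset (Fin n), I.card = k → c I = 0 := by
  classical
  suffices h : ∀ d, d ≤ l → ∀ T : Finset (Fin n), T.card = k + (l - d) →
      ∑ I ∈ T.powersetCard k, c I = 0 by
    intro I hI
    have := h l le_rfl I (by omega)
    have hps : I.powersetCard k = {I} := by rw [← hI]; exact Finset.powersetCard_self I
    rwa [hps, Finset.sum_singleton] at this
  intro d
  induction d with
  | zero =>
    intro _ T hT
    exact htop T (by omega)
  | succ d ih =>
    intro hd T hT
    have hdl : d ≤ l := Nat.le_of_succ_le hd
    have hcardT : T.card + k < n := by omega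
    have hstep : ∀ j ∈ Tᶜ, ∑ I ∈ (insert j T).powersetCard k, c I = 0 := by
      intro j hj
      exact ih hdl (insert j T)
        (by rw [Finset.card_insert_of_notMem (Finset.mem_compl.mp hj)]; omega)
    cases k with
    | zero =>
      obtain ⟨j, hj⟩ : Tᶜ.Nonempty := by
        rw [← Finset.card_pos, Finset.card_compl, Fintype.card_fin]
        omega
      have := hstep j hj
      simpa [Finset.powersetCard_zero] using this
    | succ k' =>
      have hsum : ∑ j ∈ Tᶜ, ∑ I ∈ (insert j T).powersetCard (k' + 1), c I = 0 :=
        Finset.sum_eq_zero hstep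
      have hexp : ∀ j ∈ Tᶜ, ∑ I ∈ (insert j T).powersetCard (k' + 1), c I
          = (∑ I ∈ T.powersetCard (k' + 1), c I)
            + ∑ J ∈ T.powersetCard k', c (insert j J) := by
        intro j hj
        have hjT : j ∉ T := Finset.mem_compl.mp hj
        rw [Finset.powersetCard_succ_insert hjT, Finset.sum_union, Finset.sum_image]
        · intro A hA B hB hAB
          have hAj : j ∉ A := fun hmem =>
            hjT ((Finset.mem_powersetCard.mp hA).1 hmem)
          have hBj : j ∉ B := fun hmem =>
            hjT ((Finset.mem_powersetCard.mp hB).1 hmem)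
          rw [← Finset.erase_insert hAj, hAB, Finset.erase_insert hBj]
        · rw [Finset.disjoint_left]
          intro A hA hA2
          obtain ⟨B, _, rfl⟩ := Finset.mem_image.mp hA2
          exact hjT ((Finset.mem_powersetCard.mp hA).1 (Finset.mem_insert_self _ _))
      rw [Finset.sum_congr rfl hexp, Finset.sum_add_distrib, Finset.sum_const,
        Finset.sum_comm] at hsum
      -- handle the harmonic part
      have hharm2 : ∀ J ∈ T.powersetCard k', ∑ j ∈ Tᶜ, c (insert j J)
          = - ∑ j ∈ T \ J, c (insert j J) := by
        intro J hJ
        obtain ⟨hJT, hJc⟩ := Finset.mem_powersetCard.mp hJ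
        have hsplit : Jᶜ = Tᶜ ∪ (T \ J) := by
          ext x
          simp only [Finset.mem_compl, Finset.mem_union, Finset.mem_sdiff]
          constructor
          · intro h
            by_cases hx : x ∈ T
            · exact Or.inr ⟨hx, h⟩
            · exact Or.inl hx
          · rintro (h | ⟨_, h⟩)
            · exact fun hxJ => h (hJT hxJ)
            · exact h
        have hdisj : Disjoint Tᶜ (T \ J) := by
          rw [Finset.disjoint_left]
          exact fun x hx hx2 => (Finset.mem_compl.mp hx) (Finset.mem_sdiff.mp hx2).1
        have h0 := hharm J (by omega : J.card = (k' + 1) - 1)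
        rw [hsplit, Finset.sum_union hdisj] at h0
        exact eq_neg_of_add_eq_zero_left h0
      rw [Finset.sum_congr rfl hharm2, Finset.sum_neg_distrib] at hsum
      rw [double_count] at hsum
      set F := ∑ I ∈ T.powersetCard (k' + 1), c I with hF
      have hcard : (Tᶜ.card : ℂ) = ((n - T.card : ℕ) : ℂ) := by
        rw [Finset.card_compl, Fintype.card_fin]
      rw [nsmul_eq_mul, hcard] at hsum
      have hgt : k' + 1 < n - T.card := by omega
      have hne : ((n - T.card : ℕ) : ℂ) - ((k' : ℂ) + 1) ≠ 0 := by
        have h1 : ((k' : ℂ) + 1) = ((k' + 1 : ℕ) : ℂ) := by push_cast; ring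
        rw [h1, sub_ne_zero]
        exact_mod_cast Nat.ne_of_gt hgt
      have : (((n - T.card : ℕ) : ℂ) - ((k' : ℂ) + 1)) * F = 0 := by
        linear_combination hsum
      exact (mul_eq_zero.mp this).resolve_left hne

lemma psi_rename (l : ℕ) (σ : Equiv.Perm (Fin n)) (p : MvPolynomial (Fin n) ℂ) :
    psi n l (rename σ p) = rename σ (psi n l p) := by
  classical
  rw [psi_apply, psi_apply, map_sum]
  refine (Finset.sum_nbij' (fun S => S.image σ) (fun S => S.image σ.symm)
    ?_ ?_ ?_ ?_ ?_).symm
  · intro S hS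
    simp only [Finset.mem_filter, Finset.mem_univ, true_and] at hS ⊢
    rw [Finset.card_image_of_injective _ σ.injective, hS]
  · intro S hS
    simp only [Finset.mem_filter, Finset.mem_univ, true_and] at hS ⊢
    rw [Finset.card_image_of_injective _ σ.symm.injective, hS]
  · intro S _
    simp [Finset.image_image]
  · intro S _
    simp [Finset.image_image]
  · intro S _
    beta_reduce
    rw [map_mul]
    congr 1
    · -- rename σ (aeval (κ S) p) = aeval (κ (S.image σ)) (rename σ p)
      rw [show (rename (σ : Fin n → Fin n) : MvPolynomial (Fin n) ℂ →ₐ[ℂ] MvPolynomial (Fin n) ℂ)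
          ((aeval fun i : Fin n => if i ∈ S then (0 : MvPolynomial (Fin n) ℂ) else X i) p)
        = ((rename (σ : Fin n → Fin n)).comp
            (aeval fun i : Fin n => if i ∈ S then (0 : MvPolynomial (Fin n) ℂ) else X i)) p
        from rfl, comp_aeval, aeval_rename]
      have hfun : (fun i : Fin n =>
            (rename (σ : Fin n → Fin n)) (if i ∈ S then (0 : MvPolynomial (Fin n) ℂ) else X i))
          = ((fun i : Fin n => if i ∈ S.image σ then (0 : MvPolynomial (Fin n) ℂ) else X i)
              ∘ (σ : Fin n → Fin n)) := by
        funext i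
        simp only [Function.comp_apply]
        by_cases hi : i ∈ S
        · rw [if_pos hi, if_pos (Finset.mem_image_of_mem _ hi), map_zero]
        · rw [if_neg hi, if_neg, rename_X]
          intro hmem
          obtain ⟨a, ha, hae⟩ := Finset.mem_image.mp hmem
          exact hi (σ.injective hae ▸ ha)
      rw [hfun]
    · rw [xI, xI, map_prod, Finset.prod_image (fun a _ b _ h => σ.injective h)]
      simp [rename_X]

end Aux

/-- For `0 ≤ k` and `k + l ≤ n`, the map `ψ_n^l : A_{n,k} → A_{n,k+l}` is
`S_n`-equivariant; moreover, for `k ≤ m ≤ n - k`, the restriction of `ψ_n^{m-k}`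
to `A⁰_{n,k}` is injective, hence `ψ_n^{m-k}` is an isomorphism of representations
of `S_n` from `A⁰_{n,k}` onto `H^k_{n,m}`. -/
theorem psi_equivariant_and_injective (n k l : ℕ) (hkl : k + l ≤ n) :
    (∀ f ∈ Aspace n k, psi n l f ∈ Aspace n (k + l)) ∧
    (∀ (σ : Equiv.Perm (Fin n)), ∀ f ∈ Aspace n k,
      psi n l (rename σ f) = rename σ (psi n l f)) ∧
    (∀ m : ℕ, k ≤ m → k + m ≤ n →
      (∀ f ∈ A0space n k, ∀ g ∈ A0space n k,
        psi n (m - k) f = psi n (m - k) g → f = g) ∧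
      (A0space n k).map (psi n (m - k)) = Hspace n m k) := by
  classical
  refine ⟨?_, fun σ f _ => psi_rename l σ f, ?_⟩
  · intro f hf
    induction hf using Submodule.span_induction with
    | mem x hx =>
      obtain ⟨J, hJ, rfl⟩ := hx
      rw [psi_xI]
      refine Submodule.sum_mem _ fun S hS => Submodule.subset_span ?_
      obtain ⟨hSc, hScard⟩ := Finset.mem_powersetCard.mp hS
      have hdisj : Disjoint J S := by
        rw [Finset.disjoint_right]
        exact fun a haS haJ => (Finset.mem_compl.mp (hSc haS)) haJ
      exact ⟨J ∪ S, by rw [Finset.card_union_of_disjoint hdisj, hJ, hScard], rfl⟩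
    | zero => rw [map_zero]; exact Submodule.zero_mem _
    | add x y hx hy ihx ihy => rw [map_add]; exact Submodule.add_mem _ ihx ihy
    | smul a x hx ihx => rw [map_smul]; exact Submodule.smul_mem _ a ihx
  · intro m hkm hkmn
    refine ⟨?_, rfl⟩
    intro f hf g hg heq
    obtain ⟨hfA, hfH⟩ := hf
    obtain ⟨hgA, hgH⟩ := hg
    have hsubA : f - g ∈ Aspace n k := Submodule.sub_mem _ hfA hgA
    have hz : psi n (m - k) (f - g) = 0 := by rw [map_sub, heq, sub_self]
    have hharm : ∀ J : Finset (Fin n), J.card = k - 1 →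
        ∑ j ∈ Jᶜ, coeffI (f - g) (insert j J) = 0 := by
      intro J hJ
      have h1 := hfH J hJ
      have h2 := hgH J hJ
      have : ∀ j ∈ Jᶜ, coeffI (f - g) (insert j J)
          = coeffI f (insert j J) - coeffI g (insert j J) := by
        intro j _
        rw [coeffI, coeffI, coeffI, coeff_sub]
      rw [Finset.sum_congr rfl this, Finset.sum_sub_distrib, h1, h2, sub_self]
    have hzero : ∀ I : Finset (Fin n), I.card = k → coeffI (f - g) I = 0 := by
      refine core k (m - k) (by omega) _ hharm ?_
      intro T hT
      rw [← coeffI_psi k (m - k) _ hsubA T hT, hz]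
      simp [coeffI]
    have hfg : f - g = 0 := by
      rw [repr_mem k (f - g) hsubA]
      refine Finset.sum_eq_zero fun I hI => ?_
      rw [hzero I (Finset.mem_powersetCard_univ.mp hI), zero_smul]
    exact sub_eq_zero.mp hfg


end
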